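/- Fix an integer j ≥ 1 and let a_{1j} = √j (e_j, 0, 0) and b = e³ = (0,0,1), which are σ₀-orthonormal. Then: (i) σ₀([e³,Z], a_{1j}) = 0 for all Z, i.e. B_σ(a_{1j},e³) = 0; (ii) the element B_j = 2j^{3/2}(0, e_j, 0) satisfies σ₀([a_{1j},Z], e³) = σ₀(Z, B_j) for all Z, i.e. B_j = B_σ(e³,a_{1j}); (iii) therefore Arnold's sectional curvature of the plane spanned by a_{1j} and e³ equals K_σ(a_{1j}, e³) = (1/4)σ₀(B_j,B_j) = j², so that K_σ(a_{1j}, e³) → +∞ as j → ∞. The same conclusion holds with a_{2j} = √j (0, e_j, 0) in place of a_{1j}. -/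

import Mathlib

open scoped RealInnerProductSpace
open Real

noncomputable section

abbrev l2 : Type := lp (fun _ : ℕ => ℝ) 2

abbrev Hei : Type := l2 × l2 × ℝ

/-- The group operation of the infinite dimensional Heisenberg group. -/
def hMul (p q : Hei) : Hei :=
  (p.1 + q.1, p.2.1 + q.2.1, p.2.2 + q.2.2 + ⟪p.1, q.2.1⟫ - ⟪p.2.1, q.1⟫)

/-- The square of the weak norm `‖u‖_η`. -/
def etaSq (u : l2) : ℝ := ∑' k : ℕ, (u k)^2 / ((k : ℝ) + 1)

/-- The square of the weak Riemannian norm `‖v‖_{σ,p}`. -/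
def sigmaSq (p v : Hei) : ℝ :=
  etaSq v.1 + etaSq v.2.1 + (v.2.2 - ⟪p.1, v.2.1⟫ + ⟪p.2.1, v.1⟫)^2

def PiecewiseC1 (γ : ℝ → Hei) : Prop :=
  ContinuousOn γ (Set.Icc 0 1) ∧
  ∃ S : Finset ℝ, ∀ t ∈ Set.Icc (0:ℝ) 1, t ∉ S →
    DifferentiableAt ℝ γ t ∧ ContinuousAt (deriv γ) t

def Horizontal (γ : ℝ → Hei) : Prop :=
  ∀ t ∈ Set.Icc (0:ℝ) 1, DifferentiableAt ℝ γ t →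
    deriv (fun s => (γ s).2.2) t
      = ⟪(γ t).1, deriv (fun s => (γ s).2.1) t⟫
        - ⟪(γ t).2.1, deriv (fun s => (γ s).1) t⟫

def lenSigma (γ : ℝ → Hei) : ℝ :=
  ∫ t in (0:ℝ)..1, Real.sqrt (sigmaSq (γ t) (deriv γ t))

def lenG (γ : ℝ → Hei) : ℝ :=
  ∫ t in (0:ℝ)..1,
    Real.sqrt (etaSq (deriv (fun s => (γ s).1) t) + etaSq (deriv (fun s => (γ s).2.1) t))

def dSigma (p q : Hei) : ℝ :=
  sInf {L | ∃ γ : ℝ → Hei, PiecewiseC1 γ ∧ γ 0 = p ∧ γ 1 = q ∧ lenSigma γ = L}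

def rho (p q : Hei) : ℝ :=
  sInf {L | ∃ γ : ℝ → Hei, PiecewiseC1 γ ∧ Horizontal γ ∧ γ 0 = p ∧ γ 1 = q ∧ lenG γ = L}

def sigma0 (v w : Hei) : ℝ :=
  (∑' k : ℕ, ((v.1 k) * (w.1 k) + (v.2.1 k) * (w.2.1 k)) / ((k : ℝ) + 1)) + v.2.2 * w.2.2

def bracket (X Y : Hei) : Hei := (0, 0, 2 * (⟪X.1, Y.2.1⟫ - ⟪X.2.1, Y.1⟫))

/-- `eVec n` is the `(n+1)`-th standard basis vector of `ℓ²`. -/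
def eVec (n : ℕ) : l2 := lp.single 2 n 1

def e3 : Hei := (0, 0, 1)

/-- `a₁ⱼ = √j e¹_j`. -/
def a1 (j : ℕ) : Hei := Real.sqrt j • ((eVec (j - 1), 0, 0) : Hei)

/-- `a₂ⱼ = √j e²_j`. -/
def a2 (j : ℕ) : Hei := Real.sqrt j • ((0, eVec (j - 1), 0) : Hei)

/-- `B_σ(e³, a₁ⱼ) = 2 j^{3/2} e²_j`. -/
def B1 (j : ℕ) : Hei := (2 * (j : ℝ) * Real.sqrt j) • ((0, eVec (j - 1), 0) : Hei)

/-- `B_σ(e³, a₂ⱼ) = −2 j^{3/2} e¹_j`. -/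
def B2 (j : ℕ) : Hei := (-(2 * (j : ℝ) * Real.sqrt j)) • ((eVec (j - 1), 0, 0) : Hei)

/-- `a₁ⱼ` and `e³` are `σ₀`-orthonormal, `B_σ(a₁ⱼ,e³) = 0`, `B_σ(e³,a₁ⱼ) = B1 j`, and
`K_σ(a₁ⱼ,e³) = (1/4)σ₀(B1 j, B1 j) = j² → +∞`; the same holds for `a₂ⱼ`. -/

lemma eVec_apply (m k : ℕ) : (eVec m : l2) k = if k = m then 1 else 0 := by
  simp [eVec, lp.single_apply, Pi.single_apply]

lemma inner_eVec_left (m : ℕ) (f : l2) : ⟪(eVec m : l2), f⟫ = f m := by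
  rw [eVec, lp.inner_single_left]; simp [RCLike.inner_apply]

lemma smul_l2_apply (c : ℝ) (f : l2) (k : ℕ) : (c • f : l2) k = c * f k := rfl

lemma cast_sub_one_add_one {j : ℕ} (hj : 1 ≤ j) : ((j - 1 : ℕ) : ℝ) + 1 = (j : ℝ) := by
  have := Nat.sub_add_cancel hj
  exact_mod_cast congrArg (Nat.cast : ℕ → ℝ) this

lemma tsum_single_val (f : ℕ → ℝ) (m : ℕ) (h : ∀ k, k ≠ m → f k = 0) :
    ∑' k, f k = f m := tsum_eq_single m h

theorem statement18 (j : ℕ) (hj : 1 ≤ j) :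
    sigma0 (a1 j) (a1 j) = 1 ∧ sigma0 e3 e3 = 1 ∧ sigma0 (a1 j) e3 = 0 ∧
    (∀ Z : Hei, sigma0 (bracket e3 Z) (a1 j) = 0) ∧
    (∀ Z : Hei, sigma0 (bracket (a1 j) Z) e3 = sigma0 Z (B1 j)) ∧
    (1/4) * sigma0 (B1 j) (B1 j) = (j : ℝ)^2 ∧
    sigma0 (a2 j) (a2 j) = 1 ∧ sigma0 (a2 j) e3 = 0 ∧
    (∀ Z : Hei, sigma0 (bracket e3 Z) (a2 j) = 0) ∧
    (∀ Z : Hei, sigma0 (bracket (a2 j) Z) e3 = sigma0 Z (B2 j)) ∧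
    (1/4) * sigma0 (B2 j) (B2 j) = (j : ℝ)^2 ∧
    Filter.Tendsto (fun m : ℕ => (m : ℝ)^2) Filter.atTop Filter.atTop := by
  have hj0 : (j : ℝ) ≠ 0 := by positivity
  have hjj : Real.sqrt j * Real.sqrt j = (j : ℝ) :=
    Real.mul_self_sqrt (Nat.cast_nonneg j)
  have hc := cast_sub_one_add_one hj
  set m := j - 1 with hm
  refine ⟨?_, ?_, ?_, ?_, ?_, ?_, ?_, ?_, ?_, ?_, ?_, ?_⟩
  · -- sigma0 (a1 j) (a1 j) = 1
    unfold sigma0 a1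
    rw [tsum_single_val _ m]
    · simp only [Prod.fst, Prod.smul_fst, Prod.smul_snd, smul_l2_apply, eVec_apply, ← hm,
        if_pos rfl, if_true, Prod.snd]
      simp only [Prod.smul_snd, Prod.smul_fst, smul_zero]
      simp only [lp.coeFn_zero, Pi.zero_apply]
      field_simp [hc, hjj]
      linear_combination Real.sq_sqrt (Nat.cast_nonneg (α := ℝ) j) - hc
    · intro k hk
      simp [Prod.smul_fst, Prod.smul_snd, smul_l2_apply, eVec_apply, ← hm, lp.coeFn_neg, lp.coeFn_smul, Pi.neg_apply, Pi.smul_apply, smul_eq_mul, hk]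
  · -- sigma0 e3 e3 = 1
    unfold sigma0 e3
    simp
  · -- sigma0 (a1 j) e3 = 0
    unfold sigma0 a1 e3
    simp
  · -- B(a1, e3) = 0
    intro Z
    unfold sigma0 bracket a1 e3
    simp
  · -- B(e3, a1) = B1
    intro Z
    unfold sigma0 bracket a1 B1 e3
    rw [tsum_single_val (f := fun k => (Z.1 k * ((((2:ℝ) * j * Real.sqrt j) •
        ((0, eVec m, 0) : Hei)).1 : l2) k + Z.2.1 k * ((((2:ℝ) * j * Real.sqrt j) •
        ((0, eVec m, 0) : Hei)).2.1 : l2) k) / ((k : ℝ) + 1)) m]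
    · simp only [Prod.smul_fst, Prod.smul_snd, smul_zero, lp.coeFn_zero, Pi.zero_apply, smul_l2_apply,
        eVec_apply, ← hm, if_pos rfl, if_true, mul_zero, zero_mul, zero_add, mul_one, zero_div, tsum_zero]
      rw [real_inner_smul_left, inner_eVec_left, inner_zero_left]
      field_simp [hc]
      linear_combination (2 * Real.sqrt j * Z.2.1 m) * hc
    · intro k hk
      simp [Prod.smul_fst, Prod.smul_snd, smul_l2_apply, eVec_apply, ← hm, lp.coeFn_neg, lp.coeFn_smul, Pi.neg_apply, Pi.smul_apply, smul_eq_mul, hk]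
  · -- curvature a1
    unfold sigma0 B1
    rw [tsum_single_val _ m]
    · simp only [Prod.smul_fst, Prod.smul_snd, smul_zero, lp.coeFn_zero, Pi.zero_apply, smul_l2_apply,
        eVec_apply, ← hm, if_pos rfl, if_true, mul_zero, zero_mul, zero_add, mul_one]
      field_simp [hc]
      ring_nf
      rw [Real.sq_sqrt (Nat.cast_nonneg j)]
      linear_combination (-4 * (j:ℝ)^2) * hc
    · intro k hk
      simp [Prod.smul_fst, Prod.smul_snd, smul_l2_apply, eVec_apply, ← hm, lp.coeFn_neg, lp.coeFn_smul, Pi.neg_apply, Pi.smul_apply, smul_eq_mul, hk]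
  · -- sigma0 (a2 j) (a2 j) = 1
    unfold sigma0 a2
    rw [tsum_single_val _ m]
    · simp only [Prod.smul_fst, Prod.smul_snd, smul_zero, lp.coeFn_zero, Pi.zero_apply, smul_l2_apply,
        eVec_apply, ← hm, if_pos rfl, if_true]
      field_simp [hc, hjj]
      linear_combination Real.sq_sqrt (Nat.cast_nonneg (α := ℝ) j) - hc
    · intro k hk
      simp [Prod.smul_fst, Prod.smul_snd, smul_l2_apply, eVec_apply, ← hm, lp.coeFn_neg, lp.coeFn_smul, Pi.neg_apply, Pi.smul_apply, smul_eq_mul, hk]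
  · -- sigma0 (a2 j) e3 = 0
    unfold sigma0 a2 e3
    simp
  · -- B(a2, e3) = 0
    intro Z
    unfold sigma0 bracket a2 e3
    simp
  · -- B(e3, a2) = B2
    intro Z
    unfold sigma0 bracket a2 B2 e3
    rw [tsum_single_val (f := fun k => (Z.1 k * (((-((2:ℝ) * j * Real.sqrt j)) •
        ((eVec m, 0, 0) : Hei)).1 : l2) k + Z.2.1 k * (((-((2:ℝ) * j * Real.sqrt j)) •
        ((eVec m, 0, 0) : Hei)).2.1 : l2) k) / ((k : ℝ) + 1)) m]
    · simp only [Prod.smul_fst, Prod.smul_snd, smul_zero, lp.coeFn_zero, Pi.zero_apply, smul_l2_apply,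
        eVec_apply, ← hm, if_pos rfl, if_true, mul_zero, zero_mul, add_zero, mul_one, zero_div, tsum_zero]
      rw [real_inner_smul_left, inner_eVec_left, inner_zero_left]
      field_simp [hc]
      linear_combination (-2 * Real.sqrt j * Z.1 m) * hc
    · intro k hk
      simp [Prod.smul_fst, Prod.smul_snd, smul_l2_apply, eVec_apply, ← hm, lp.coeFn_neg, lp.coeFn_smul, Pi.neg_apply, Pi.smul_apply, smul_eq_mul, hk, -neg_smul]
  · -- curvature a2
    unfold sigma0 B2
    rw [tsum_single_val _ m]
    · simp only [Prod.smul_fst, Prod.smul_snd, smul_zero, lp.coeFn_zero, Pi.zero_apply, smul_l2_apply,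
        eVec_apply, ← hm, if_pos rfl, if_true, mul_zero, zero_mul, add_zero, mul_one]
      field_simp [hc]
      ring_nf
      rw [Real.sq_sqrt (Nat.cast_nonneg j)]
      linear_combination (-4 : ℝ) * hc
    · intro k hk
      simp [Prod.smul_fst, Prod.smul_snd, smul_l2_apply, eVec_apply, ← hm, lp.coeFn_neg, lp.coeFn_smul, Pi.neg_apply, Pi.smul_apply, smul_eq_mul, hk, -neg_smul]
  · exact (Filter.tendsto_pow_atTop (two_ne_zero)).comp tendsto_natCast_atTop_atTop


end
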